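/- Let μ ≥ θ ≥ 0, ℓ ∈ ℝ, x ∈ ℝ, and let w : [0,∞) → ℝ be continuous with w(0) = 0. Let X : [0,∞) → ℝ be continuous and Ψ : [0,∞) → ℝ be locally integrable with Ψ(t) ≤ X(t) for all t ≥ 0, and suppose X(t) = x + w(t) + ∫₀ᵗ [ −θX(s) − (μ−θ)Ψ(s) + ℓ ] ds for all t ≥ 0. Let Υ be the unique continuous solution of Υ(t) = x + w(t) + ∫₀ᵗ (−μΥ(s) + ℓ) ds. Then X(t) ≥ Υ(t) for all t ≥ 0. Symmetrically, if instead θ ≥ μ ≥ 0 (with the same hypotheses), then X(t) ≤ Υ(t) for all t ≥ 0. -/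

import Mathlib

open Set MeasureTheory Real intervalIntegral

lemma key_aux (μ : ℝ) (hμ : 0 ≤ μ) (D g : ℝ → ℝ) (hD : Continuous D)
    (hgint : ∀ a b : ℝ, IntervalIntegrable g volume a b)
    (hg : ∀ s, 0 ≤ g s)
    (hDeq : ∀ t ≥ (0:ℝ), D t = (∫ s in (0:ℝ)..t, g s) - μ * ∫ s in (0:ℝ)..t, D s) :
    ∀ t ≥ (0:ℝ), 0 ≤ D t := by
  intro t ht
  set G : ℝ → ℝ := fun u => ∫ s in (0:ℝ)..u, g s with hGdef
  have hGcont : Continuous G := intervalIntegral.continuous_primitive hgint 0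
  have hGmono : Monotone G := by
    intro a b hab
    have h1 : G b - G a = ∫ s in a..b, g s :=
      integral_interval_sub_left (hgint 0 b) (hgint 0 a)
    have hnn : 0 ≤ ∫ s in a..b, g s :=
      intervalIntegral.integral_nonneg hab (fun u _ => hg u)
    linarith
  have hG0 : G 0 = 0 := by simp [hGdef]
  have hGnn : ∀ u, 0 ≤ u → 0 ≤ G u := fun u hu => hG0 ▸ hGmono hu
  set I : ℝ → ℝ := fun u => ∫ s in (0:ℝ)..u, D s with hIdef
  have hI : ∀ s : ℝ, HasDerivAt I (D s) s := fun s =>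
    integral_hasDerivAt_right (hD.intervalIntegrable 0 s)
      (hD.stronglyMeasurable.stronglyMeasurableAtFilter) hD.continuousAt
  have hexpD : ∀ s : ℝ, HasDerivAt (fun u => exp (μ * u)) (μ * exp (μ * s)) s := by
    intro s
    have := (Real.hasDerivAt_exp (μ * s)).comp s ((hasDerivAt_id s).const_mul μ)
    simpa [mul_comm, Function.comp_def] using this
  set J : ℝ → ℝ := fun u => exp (μ * u) * I u with hJdef
  have hJ : ∀ s : ℝ, 0 ≤ s → HasDerivAt J (exp (μ * s) * G s) s := by
    intro s hs
    have h2 := (hexpD s).mul (hI s)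
    have heq : μ * exp (μ * s) * I s + exp (μ * s) * D s = exp (μ * s) * G s := by
      have hds : D s = G s - μ * I s := hDeq s hs
      rw [hds]; ring
    simpa [hJdef, heq, Pi.mul_def] using h2
  have hcont : Continuous fun s : ℝ => exp (μ * s) * G s :=
    (Real.continuous_exp.comp (continuous_const.mul continuous_id)).mul hGcont
  have hJt : J t = ∫ s in (0:ℝ)..t, exp (μ * s) * G s := by
    have heq := integral_eq_sub_of_hasDerivAt (f := J)
      (f' := fun s => exp (μ * s) * G s) (a := 0) (b := t)
      (fun s hs => by
        rw [uIcc_of_le ht] at hs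
        exact hJ s hs.1) (hcont.intervalIntegrable 0 t)
    have hJ0 : J 0 = 0 := by simp [hJdef, hIdef]
    rw [heq, hJ0, sub_zero]
  rcases eq_or_lt_of_le hμ with hμ0 | hμpos
  · have h := hDeq t ht
    rw [← hμ0] at h
    simpa [h] using hGnn t ht
  · have hbound : J t ≤ G t * ((exp (μ * t) - 1) / μ) := by
    -- J t = ∫ e^{μs} G s ≤ ∫ e^{μs} G t = G t (e^{μt}-1)/μ
      rw [hJt]
      have h1 : (∫ s in (0:ℝ)..t, exp (μ * s) * G s)
          ≤ ∫ s in (0:ℝ)..t, exp (μ * s) * G t := by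
        apply intervalIntegral.integral_mono_on ht (hcont.intervalIntegrable 0 t)
          (((Real.continuous_exp.comp (continuous_const.mul continuous_id)).mul
            continuous_const).intervalIntegrable 0 t)
        intro u hu
        exact mul_le_mul_of_nonneg_left (hGmono hu.2) (exp_nonneg _)
      have h2 : (∫ s in (0:ℝ)..t, exp (μ * s) * G t)
          = ((exp (μ * t) - 1) / μ) * G t := by
        rw [intervalIntegral.integral_mul_const]
        congr 1
        have heq := integral_eq_sub_of_hasDerivAt
          (f := fun s => exp (μ * s) / μ) (f' := fun s => exp (μ * s)) (a := 0) (b := t)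
          (fun s _ => by
            have hd := (hexpD s).div_const μ
            simpa [mul_div_assoc, mul_div_cancel_left₀ _ (ne_of_gt hμpos)] using hd)
          ((Real.continuous_exp.comp
            (continuous_const.mul continuous_id)).intervalIntegrable 0 t)
        rw [heq]
        field_simp
        simp
      linarith
    have hDt : D t = G t - μ * I t := hDeq t ht
    have hJI : J t = exp (μ * t) * I t := rfl
    have hexp : (0:ℝ) < exp (μ * t) := exp_pos _
    have hGt : 0 ≤ G t := hGnn t ht
    have h1exp : 1 ≤ exp (μ * t) := by
      have h0 : (0:ℝ) ≤ μ * t := mul_nonneg hμ ht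
      linarith [Real.add_one_le_exp (μ * t)]
    have hμJ : μ * J t ≤ G t * (exp (μ * t) - 1) := by
      have h3 := mul_le_mul_of_nonneg_left hbound hμpos.le
      calc μ * J t ≤ μ * (G t * ((exp (μ * t) - 1) / μ)) := h3
        _ = G t * (exp (μ * t) - 1) := by field_simp
    rw [hDt]
    nlinarith [hμJ, hGt, hexp, h1exp, hJI]

theorem stmt_15 (μ θ ℓ x : ℝ) (hμ : 0 ≤ μ) (hθ : 0 ≤ θ)
    (w : ℝ → ℝ) (hw : ContinuousOn w (Ici 0)) (hw0 : w 0 = 0)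
    (X Ψ : ℝ → ℝ) (hX : ContinuousOn X (Ici 0))
    (hΨint : ∀ t : ℝ, IntervalIntegrable Ψ volume 0 t)
    (hΨle : ∀ t ≥ (0:ℝ), Ψ t ≤ X t)
    (hXeq : ∀ t ≥ (0:ℝ), X t = x + w t + ∫ s in (0:ℝ)..t, (-θ * X s - (μ - θ) * Ψ s + ℓ))
    (Υ : ℝ → ℝ) (hΥ : ContinuousOn Υ (Ici 0))
    (hΥeq : ∀ t ≥ (0:ℝ), Υ t = x + w t + ∫ s in (0:ℝ)..t, (-μ * Υ s + ℓ)) :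
    (θ ≤ μ → ∀ t ≥ (0:ℝ), Υ t ≤ X t) ∧ (μ ≤ θ → ∀ t ≥ (0:ℝ), X t ≤ Υ t) := by
  have hmax : Continuous fun s : ℝ => max s 0 := continuous_id.max continuous_const
  have hmem : ∀ s : ℝ, max s 0 ∈ Ici (0:ℝ) := fun s => le_max_right s 0
  have hmax_eq : ∀ s : ℝ, 0 ≤ s → max s 0 = s := fun s hs => max_eq_left hs
  set Xt : ℝ → ℝ := fun s => X (max s 0) with hXtdef
  set Yt : ℝ → ℝ := fun s => Υ (max s 0) with hYtdef
  have hXtc : Continuous Xt := hX.comp_continuous hmax hmem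
  have hYtc : Continuous Yt := hΥ.comp_continuous hmax hmem
  set D0 : ℝ → ℝ := fun s => Xt s - Yt s with hD0def
  have hD0c : Continuous D0 := hXtc.sub hYtc
  set g0 : ℝ → ℝ :=
    fun s => Set.indicator (Ici 0) (fun u => (μ - θ) * (Xt u - Ψ u)) s with hg0def
  have hΨab : ∀ a b : ℝ, IntervalIntegrable Ψ volume a b := fun a b =>
    (hΨint a).symm.trans (hΨint b)
  have hg0int : ∀ a b : ℝ, IntervalIntegrable g0 volume a b := by
    intro a b
    have hbase : IntervalIntegrable (fun u => (μ - θ) * (Xt u - Ψ u)) volume a b :=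
      ((hXtc.intervalIntegrable a b).sub (hΨab a b)).const_mul (μ - θ)
    rw [intervalIntegrable_iff] at hbase ⊢
    exact hbase.indicator measurableSet_Ici
  -- interval-integrability of X, Υ, Ψ and the integrands on [0, t] for t ≥ 0
  have hXint : ∀ t : ℝ, 0 ≤ t → IntervalIntegrable X volume 0 t := by
    intro t ht
    apply ContinuousOn.intervalIntegrable
    apply hX.mono
    rw [uIcc_of_le ht]
    exact Icc_subset_Ici_self
  have hYint : ∀ t : ℝ, 0 ≤ t → IntervalIntegrable Υ volume 0 t := by
    intro t ht
    apply ContinuousOn.intervalIntegrable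
    apply hΥ.mono
    rw [uIcc_of_le ht]
    exact Icc_subset_Ici_self
  have hf1int : ∀ t : ℝ, 0 ≤ t →
      IntervalIntegrable (fun s => -θ * X s - (μ - θ) * Ψ s + ℓ) volume 0 t := by
    intro t ht
    exact (((hXint t ht).const_mul (-θ)).sub ((hΨint t).const_mul (μ - θ))).add
      (intervalIntegrable_const)
  have hf2int : ∀ t : ℝ, 0 ≤ t →
      IntervalIntegrable (fun s => -μ * Υ s + ℓ) volume 0 t := by
    intro t ht
    exact ((hYint t ht).const_mul (-μ)).add intervalIntegrable_const
  -- the base integral equation for D0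
  have hbase : ∀ t ≥ (0:ℝ),
      D0 t = (∫ s in (0:ℝ)..t, g0 s) - μ * ∫ s in (0:ℝ)..t, D0 s := by
    intro t ht
    have hD0t : D0 t = X t - Υ t := by
      simp [hD0def, hXtdef, hYtdef, hmax_eq t ht]
    have hsub : X t - Υ t =
        ∫ s in (0:ℝ)..t, ((-θ * X s - (μ - θ) * Ψ s + ℓ) - (-μ * Υ s + ℓ)) := by
      rw [intervalIntegral.integral_sub (hf1int t ht) (hf2int t ht)]
      rw [hXeq t ht, hΥeq t ht]
      ring
    have hcongr : ∫ s in (0:ℝ)..t, ((-θ * X s - (μ - θ) * Ψ s + ℓ) - (-μ * Υ s + ℓ))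
        = ∫ s in (0:ℝ)..t, (g0 s - μ * D0 s) := by
      apply intervalIntegral.integral_congr
      intro s hs
      rw [uIcc_of_le ht] at hs
      have hs0 : (0:ℝ) ≤ s := hs.1
      have h1 : g0 s = (μ - θ) * (X s - Ψ s) := by
        simp [hg0def, Set.indicator_of_mem (mem_Ici.2 hs0), hXtdef, hmax_eq s hs0]
      have h2 : D0 s = X s - Υ s := by
        simp [hD0def, hXtdef, hYtdef, hmax_eq s hs0]
      show -θ * X s - (μ - θ) * Ψ s + ℓ - (-μ * Υ s + ℓ) = g0 s - μ * D0 s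
      rw [h1, h2]
      ring
    have hsplit : ∫ s in (0:ℝ)..t, (g0 s - μ * D0 s)
        = (∫ s in (0:ℝ)..t, g0 s) - μ * ∫ s in (0:ℝ)..t, D0 s := by
      rw [intervalIntegral.integral_sub (hg0int 0 t)
        ((hD0c.intervalIntegrable 0 t).const_mul μ),
        intervalIntegral.integral_const_mul]
    rw [hD0t, hsub, hcongr, hsplit]
  constructor
  · intro hθμ t ht
    have hg0nn : ∀ s, 0 ≤ g0 s := by
      intro s
      by_cases hs0 : (0:ℝ) ≤ s
      · have h1 : g0 s = (μ - θ) * (X s - Ψ s) := by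
          simp [hg0def, Set.indicator_of_mem (mem_Ici.2 hs0), hXtdef, hmax_eq s hs0]
        have h2 : Ψ s ≤ X s := hΨle s hs0
        rw [h1]
        exact mul_nonneg (by linarith) (by linarith)
      · have h1 : g0 s = 0 := by
          simp [hg0def, Set.indicator_of_notMem (by simpa using hs0 : s ∉ Ici (0:ℝ))]
        rw [h1]
    have := key_aux μ hμ D0 g0 hD0c hg0int hg0nn hbase t ht
    have hD0t : D0 t = X t - Υ t := by
      simp [hD0def, hXtdef, hYtdef, hmax_eq t ht]
    linarith [hD0t ▸ this]
  · intro hμθ t ht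
    have hbase' : ∀ u ≥ (0:ℝ),
        (fun s => -D0 s) u = (∫ s in (0:ℝ)..u, -g0 s)
          - μ * ∫ s in (0:ℝ)..u, -D0 s := by
      intro u hu
      show -D0 u = (∫ s in (0:ℝ)..u, -g0 s) - μ * ∫ s in (0:ℝ)..u, -D0 s
      rw [intervalIntegral.integral_neg, intervalIntegral.integral_neg]
      linarith [hbase u hu]
    have hg0nn : ∀ s, 0 ≤ -g0 s := by
      intro s
      by_cases hs0 : (0:ℝ) ≤ s
      · have h1 : g0 s = (μ - θ) * (X s - Ψ s) := by
          simp [hg0def, Set.indicator_of_mem (mem_Ici.2 hs0), hXtdef, hmax_eq s hs0]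
        have h2 : Ψ s ≤ X s := hΨle s hs0
        have h3 : (μ - θ) * (X s - Ψ s) ≤ 0 :=
          mul_nonpos_of_nonpos_of_nonneg (by linarith) (by linarith)
        rw [h1]; linarith
      · have h1 : g0 s = 0 := by
          simp [hg0def, Set.indicator_of_notMem (by simpa using hs0 : s ∉ Ici (0:ℝ))]
        rw [h1]; simp
    have := key_aux μ hμ (fun s => -D0 s) (fun s => -g0 s) hD0c.neg
      (fun a b => (hg0int a b).neg) hg0nn hbase' t ht
    have hD0t : D0 t = X t - Υ t := by
      simp [hD0def, hXtdef, hYtdef, hmax_eq t ht]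
    have this2 : 0 ≤ -D0 t := this
    linarith [hD0t ▸ this2]
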